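/- Let X be a real Banach space, x₀ ∈ X, R > 0, and let A satisfy the variable Lipschitz condition on B[x₀,R] with a continuous nonnegative function k on [0,R]. Set a = ‖A x₀ − x₀‖, a₊(r) = a + ∫₀^r k(t) dt, assume a₊ has a fixed point in [0,R], let r* be its smallest fixed point in [0,R], and let x* be the fixed point of A with ‖x* − x₀‖ ≤ r* obtained as the limit of the successive approximations x_{n+1} = A x_n starting from x₀. Let r ∈ [r*, R] be such that a₊(s) < s for all s with r* < s ≤ r. Then x* is the unique fixed point of A in B[x₀,r]: every x̄ with A x̄ = x̄ and ‖x̄ − x₀‖ ≤ r equals x*. -/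

import Mathlib

open Set Filter intervalIntegral

/-- Segment lemma: along the segment from `v` to `u`, the variable Lipschitz
condition integrates to a bound by the integral of `k'`. -/
lemma seg_bound {X : Type*} [NormedAddCommGroup X] [NormedSpace ℝ X]
    (x₀ : X) (R : ℝ) (A : X → X) (k' : ℝ → ℝ)
    (hk'c : Continuous k') (hk'0 : ∀ τ, 0 ≤ k' τ)
    (hLip : ∀ x₁ x₂ : X, ∀ r : ℝ, ‖x₁ - x₀‖ ≤ r → ‖x₂ - x₀‖ ≤ r →
      0 < r → r ≤ R → ‖A x₁ - A x₂‖ ≤ k' r * ‖x₁ - x₂‖)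
    (u v : X) (t : ℝ) (ht : 0 ≤ t) (hv : ‖v - x₀‖ ≤ t)
    (hs : t + ‖u - v‖ ≤ R) :
    ‖A u - A v‖ ≤ ∫ τ in t..(t + ‖u - v‖), k' τ := by
  set δ : ℝ := ‖u - v‖ with hδdef
  rcases eq_or_lt_of_le (norm_nonneg (u - v)) with hδ0 | hδpos
  · have huv : u = v := by
      have : ‖u - v‖ = 0 := hδ0.symm
      rwa [norm_sub_eq_zero_iff] at this
    have hδ' : δ = 0 := hδ0.symm
    rw [huv, hδ']
    simp
  have hδpos : 0 < δ := hδpos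
  have hRpos : 0 < R := lt_of_lt_of_le (by linarith) hs
  set γ : ℝ → X := fun c => v + c • (u - v) with hγdef
  have hγnorm : ∀ c : ℝ, 0 ≤ c → ‖γ c - x₀‖ ≤ t + c * δ := by
    intro c hc
    have : γ c - x₀ = (v - x₀) + c • (u - v) := by simp [hγdef]; abel
    rw [this]
    calc ‖(v - x₀) + c • (u - v)‖ ≤ ‖v - x₀‖ + ‖c • (u - v)‖ := norm_add_le _ _
      _ ≤ t + c * δ := by
          rw [norm_smul, Real.norm_eq_abs, abs_of_nonneg hc]
          exact add_le_add hv le_rfl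
  have hγsub : ∀ c₁ c₂ : ℝ, γ c₁ - γ c₂ = (c₁ - c₂) • (u - v) := by
    intro c₁ c₂; simp only [hγdef]; rw [sub_smul]; abel
  set f : ℝ → ℝ := fun c => ‖A (γ c) - A v‖ with hfdef
  set B : ℝ → ℝ := fun c => ∫ τ in t..(t + c * δ), k' τ with hBdef
  set B' : ℝ → ℝ := fun c => k' (t + c * δ) * δ with hB'def
  -- B has derivative B'
  have hB'deriv : ∀ c : ℝ, HasDerivAt B (B' c) c := by
    intro c
    have hF : HasDerivAt (fun y => ∫ τ in t..y, k' τ) (k' (t + c * δ)) (t + c * δ) :=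
      integral_hasDerivAt_right (hk'c.intervalIntegrable _ _)
        (hk'c.stronglyMeasurableAtFilter _ _) hk'c.continuousAt
    have hg : HasDerivAt (fun c : ℝ => t + c * δ) δ c := by
      simpa using ((hasDerivAt_id c).mul_const δ).const_add t
    exact HasDerivAt.comp c hF hg
  have hBc : ContinuousOn B (Icc 0 1) := fun c _ => ((hB'deriv c).continuousAt).continuousWithinAt
  -- f is continuous (Lipschitz on [0,1])
  have hfc : ContinuousOn f (Icc 0 1) := by
    have : LipschitzOnWith (Real.toNNReal (k' R * δ)) f (Icc 0 1) := by
      apply LipschitzOnWith.of_dist_le_mul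
      intro c₁ hc₁ c₂ hc₂
      have h1 : ‖A (γ c₁) - A (γ c₂)‖ ≤ k' R * ‖γ c₁ - γ c₂‖ := by
        apply hLip _ _ R _ _ hRpos le_rfl
        · exact (hγnorm c₁ hc₁.1).trans (by nlinarith [hc₁.2])
        · exact (hγnorm c₂ hc₂.1).trans (by nlinarith [hc₂.2])
      have h2 : ‖γ c₁ - γ c₂‖ = |c₁ - c₂| * δ := by
        rw [hγsub, norm_smul, Real.norm_eq_abs]
      rw [Real.dist_eq, Real.dist_eq]
      have h3 : |f c₁ - f c₂| ≤ ‖A (γ c₁) - A (γ c₂)‖ := by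
        have := abs_norm_sub_norm_le (A (γ c₁) - A v) (A (γ c₂) - A v)
        simpa [hfdef] using this.trans_eq (by congr 1; abel)
      calc |f c₁ - f c₂| ≤ k' R * (|c₁ - c₂| * δ) := h3.trans (h2 ▸ h1)
        _ ≤ (Real.toNNReal (k' R * δ) : ℝ) * |c₁ - c₂| := by
            rw [Real.coe_toNNReal _ (mul_nonneg (hk'0 R) hδpos.le)]
            ring_nf; nlinarith [abs_nonneg (c₁ - c₂)]
    exact this.continuousOn
  have ha : f 0 ≤ B 0 := by simp [hfdef, hBdef, hγdef]
  -- the slope bound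
  have bound : ∀ c ∈ Ico (0:ℝ) 1, ∀ ρ, B' c < ρ → ∃ᶠ z in nhdsWithin c (Ioi c), slope f c z < ρ := by
    intro c hc ρ hρ
    apply Filter.Eventually.frequently
    have h1 : ∀ᶠ z in nhdsWithin c (Ioi c), z < 1 :=
      eventually_nhdsWithin_of_eventually_nhds (Filter.Tendsto.eventually_lt_const hc.2 tendsto_id)
    have hcont : ContinuousAt (fun z => k' (t + z * δ) * δ) c := by fun_prop
    have h2 : ∀ᶠ z in nhdsWithin c (Ioi c), k' (t + z * δ) * δ < ρ :=
      eventually_nhdsWithin_of_eventually_nhds (Filter.Tendsto.eventually_lt_const hρ hcont)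
    have h3 : ∀ᶠ z in nhdsWithin c (Ioi c), z ∈ Ioi c := eventually_mem_nhdsWithin
    filter_upwards [h1, h2, h3] with z hz1 hz2 hz3
    have hzc : c < z := hz3
    have hz0 : 0 < z := lt_of_le_of_lt hc.1 hzc
    have hrad : 0 < t + z * δ := by nlinarith
    have hradR : t + z * δ ≤ R := by nlinarith
    have hlip := hLip (γ z) (γ c) (t + z * δ) (hγnorm z hz0.le)
      ((hγnorm c hc.1).trans (by nlinarith)) hrad hradR
    have hγn : ‖γ z - γ c‖ = (z - c) * δ := by
      rw [hγsub, norm_smul, Real.norm_eq_abs, abs_of_pos (by linarith)]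
    have hfz : f z - f c ≤ ‖A (γ z) - A (γ c)‖ := by
      have := norm_sub_norm_le (A (γ z) - A v) (A (γ c) - A v)
      simpa [hfdef] using this.trans_eq (by congr 1; abel)
    rw [slope_def_field]
    have h4 : f z - f c ≤ k' (t + z * δ) * ((z - c) * δ) := by
      calc f z - f c ≤ ‖A (γ z) - A (γ c)‖ := hfz
        _ ≤ k' (t + z * δ) * ‖γ z - γ c‖ := hlip
        _ = k' (t + z * δ) * ((z - c) * δ) := by rw [hγn]
    have h5 : (f z - f c) / (z - c) ≤ k' (t + z * δ) * δ := by
      rw [div_le_iff₀ (by linarith)]; nlinarith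
    exact lt_of_le_of_lt h5 hz2
  have := image_le_of_liminf_slope_right_le_deriv_boundary hfc ha hBc
    (fun c _ => (hB'deriv c).hasDerivWithinAt) bound (right_mem_Icc.mpr zero_le_one)
  simpa [hfdef, hBdef, hγdef] using this
/-- Uniqueness part of the majorization fixed point principle: if `r ∈ [r*, R]`
is such that `a₊(s) < s` for all `s ∈ (r*, r]`, then the fixed point `x*`
(obtained as the limit of the successive approximations from `x₀`) is the
unique fixed point of `A` in the ball `B[x₀,r]`. -/
theorem majorization_fixed_point_uniqueness
    {X : Type*} [NormedAddCommGroup X] [NormedSpace ℝ X] [CompleteSpace X]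
    (x₀ : X) (R : ℝ) (hR : 0 < R) (A : X → X) (k : ℝ → ℝ)
    (hk_cont : ContinuousOn k (Set.Icc 0 R))
    (hk_nonneg : ∀ t ∈ Set.Icc (0 : ℝ) R, 0 ≤ k t)
    (hLip : ∀ x₁ x₂ : X, ∀ r : ℝ, ‖x₁ - x₀‖ ≤ r → ‖x₂ - x₀‖ ≤ r →
      0 < r → r ≤ R → ‖A x₁ - A x₂‖ ≤ k r * ‖x₁ - x₂‖)
    (a : ℝ) (ha : a = ‖A x₀ - x₀‖)
    (aplus : ℝ → ℝ) (haplus : ∀ r : ℝ, aplus r = a + ∫ t in (0 : ℝ)..r, k t)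
    (rstar : ℝ) (hrstar_mem : rstar ∈ Set.Icc (0 : ℝ) R)
    (hrstar_fix : aplus rstar = rstar)
    (hrstar_min : ∀ s ∈ Set.Icc (0 : ℝ) R, aplus s = s → rstar ≤ s)
    (x : ℕ → X) (hx0 : x 0 = x₀) (hx_succ : ∀ n : ℕ, x (n + 1) = A (x n))
    (xstar : X) (hxstar_lim : Filter.Tendsto x Filter.atTop (nhds xstar))
    (hxstar_fix : A xstar = xstar) (hxstar_norm : ‖xstar - x₀‖ ≤ rstar)
    (r : ℝ) (hr_mem : rstar ≤ r) (hrR : r ≤ R)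
    (hr_lt : ∀ s : ℝ, rstar < s → s ≤ r → aplus s < s) :
    ∀ xbar : X, A xbar = xbar → ‖xbar - x₀‖ ≤ r → xbar = xstar := by
  intro xbar hbar_fix hbar_norm
  have ha_nonneg : 0 ≤ a := ha ▸ norm_nonneg _
  -- clamped kernel
  set k' : ℝ → ℝ := fun τ => k (min (max τ 0) R) with hk'def
  have hclamp : ∀ τ : ℝ, min (max τ 0) R ∈ Set.Icc (0:ℝ) R := fun τ =>
    ⟨le_min (le_max_right τ 0) hR.le, min_le_right _ _⟩
  have hk'c : Continuous k' := by
    apply hk_cont.comp_continuous (by continuity) hclamp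
  have hk'0 : ∀ τ, 0 ≤ k' τ := fun τ => hk_nonneg _ (hclamp τ)
  have hk'eq : ∀ τ ∈ Set.Icc (0:ℝ) R, k' τ = k τ := by
    intro τ hτ
    simp only [hk'def]
    rw [max_eq_left hτ.1, min_eq_left hτ.2]
  -- the primitive
  set F : ℝ → ℝ := fun y => ∫ τ in (0:ℝ)..y, k' τ with hFdef
  have hF0 : F 0 = 0 := intervalIntegral.integral_same
  have hFmono : Monotone F := by
    intro y z hyz
    have h1 : F z - F y = ∫ τ in y..z, k' τ :=
      intervalIntegral.integral_interval_sub_left (hk'c.intervalIntegrable _ _)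
        (hk'c.intervalIntegrable _ _)
    have h2 : 0 ≤ ∫ τ in y..z, k' τ :=
      intervalIntegral.integral_nonneg hyz fun u _ => hk'0 u
    linarith
  have hFc : Continuous F := by
    rw [continuous_iff_continuousAt]
    intro y
    exact (intervalIntegral.integral_hasDerivAt_right (hk'c.intervalIntegrable _ _)
      (hk'c.stronglyMeasurableAtFilter _ _) hk'c.continuousAt).continuousAt
  have hG : ∀ s ∈ Set.Icc (0:ℝ) R, aplus s = a + F s := by
    intro s hs
    rw [haplus s, hFdef]
    congr 1
    apply intervalIntegral.integral_congr
    intro τ hτ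
    rw [Set.uIcc_of_le hs.1] at hτ
    exact (hk'eq τ ⟨hτ.1, hτ.2.trans hs.2⟩).symm
  have hLip' : ∀ x₁ x₂ : X, ∀ ρ : ℝ, ‖x₁ - x₀‖ ≤ ρ → ‖x₂ - x₀‖ ≤ ρ → 0 < ρ → ρ ≤ R →
      ‖A x₁ - A x₂‖ ≤ k' ρ * ‖x₁ - x₂‖ := by
    intro x₁ x₂ ρ h1 h2 h3 h4
    rw [hk'eq ρ ⟨h3.le, h4⟩]
    exact hLip x₁ x₂ ρ h1 h2 h3 h4
  -- segment estimate in terms of F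
  have seg : ∀ (u v : X) (t : ℝ), 0 ≤ t → ‖v - x₀‖ ≤ t → t + ‖u - v‖ ≤ R →
      ‖A u - A v‖ ≤ F (t + ‖u - v‖) - F t := by
    intro u v t ht hv hs
    have h1 := seg_bound x₀ R A k' hk'c hk'0 hLip' u v t ht hv hs
    have h2 : F (t + ‖u - v‖) - F t = ∫ τ in t..(t + ‖u - v‖), k' τ :=
      intervalIntegral.integral_interval_sub_left (hk'c.intervalIntegrable _ _)
        (hk'c.intervalIntegrable _ _)
    linarith
  -- any fixed point in B[x₀,r] lies in B[x₀,rstar]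
  have hbar_rstar : ‖xbar - x₀‖ ≤ rstar := by
    by_contra h
    push_neg at h
    have hρR : ‖xbar - x₀‖ ≤ R := hbar_norm.trans hrR
    have h1 := seg xbar x₀ 0 le_rfl (by simp) (by simpa using hρR)
    have h2 : ‖xbar - x₀‖ ≤ ‖A xbar - A x₀‖ + a := by
      have h3 : xbar - x₀ = (A xbar - A x₀) + (A x₀ - x₀) := by rw [hbar_fix]; abel
      calc ‖xbar - x₀‖ = ‖(A xbar - A x₀) + (A x₀ - x₀)‖ := by rw [← h3]
        _ ≤ ‖A xbar - A x₀‖ + ‖A x₀ - x₀‖ := norm_add_le _ _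
        _ = ‖A xbar - A x₀‖ + a := by rw [ha]
    have h4 : aplus ‖xbar - x₀‖ = a + F ‖xbar - x₀‖ := hG _ ⟨norm_nonneg _, hρR⟩
    have h5 := hr_lt ‖xbar - x₀‖ h hbar_norm
    simp only [zero_add] at h1
    rw [hF0] at h1
    linarith
  -- the majorant iterates
  set t : ℕ → ℝ := fun n => aplus^[n] 0 with htdef
  have ht_succ : ∀ n, t (n + 1) = aplus (t n) := fun n =>
    Function.iterate_succ_apply' aplus n 0
  have haplus_mono : ∀ s₁ s₂ : ℝ, 0 ≤ s₁ → s₁ ≤ s₂ → s₂ ≤ R → aplus s₁ ≤ aplus s₂ := by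
    intro s₁ s₂ h1 h2 h3
    rw [hG s₁ ⟨h1, h2.trans h3⟩, hG s₂ ⟨h1.trans h2, h3⟩]
    exact add_le_add_right (hFmono h2) a
  have ht_bounds : ∀ n, 0 ≤ t n ∧ t n ≤ rstar := by
    intro n
    induction n with
    | zero => exact ⟨le_rfl, hrstar_mem.1⟩
    | succ n ih =>
      refine ⟨?_, ?_⟩
      · rw [ht_succ n, hG _ ⟨ih.1, ih.2.trans hrstar_mem.2⟩]
        have := hFmono ih.1
        rw [hF0] at this
        linarith
      · rw [ht_succ n, ← hrstar_fix]
        exact haplus_mono _ _ ih.1 ih.2 hrstar_mem.2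
  have ht_mono : Monotone t := by
    apply monotone_nat_of_le_succ
    intro n
    induction n with
    | zero =>
      rw [show t 0 = 0 from rfl]
      exact (ht_bounds 1).1
    | succ n ih =>
      rw [ht_succ n, ht_succ (n+1)]
      exact haplus_mono _ _ (ht_bounds n).1 ih ((ht_bounds (n+1)).2.trans hrstar_mem.2)
  -- t n → rstar
  have hlim : Filter.Tendsto t Filter.atTop (nhds rstar) := by
    have hbdd : BddAbove (Set.range t) := ⟨rstar, by rintro y ⟨n, rfl⟩; exact (ht_bounds n).2⟩
    have hconv := tendsto_atTop_ciSup ht_mono hbdd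
    set L := ⨆ n, t n with hLdef
    have hL_le : L ≤ rstar := ciSup_le fun n => (ht_bounds n).2
    have hL_ge : 0 ≤ L := le_trans (by rfl : (0:ℝ) ≤ t 0) (le_ciSup hbdd 0)
    have h1 : Filter.Tendsto (fun n => t (n + 1)) Filter.atTop (nhds L) :=
      hconv.comp (Filter.tendsto_add_atTop_nat 1)
    have h2 : Filter.Tendsto (fun n => a + F (t n)) Filter.atTop (nhds (a + F L)) :=
      (tendsto_const_nhds.add (hFc.continuousAt.tendsto.comp hconv))
    have h3 : (fun n => t (n + 1)) = fun n => a + F (t n) := by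
      funext n
      rw [ht_succ n, hG _ ⟨(ht_bounds n).1, (ht_bounds n).2.trans hrstar_mem.2⟩]
    rw [h3] at h1
    have hfixL : aplus L = L := by
      rw [hG L ⟨hL_ge, hL_le.trans hrstar_mem.2⟩]
      exact tendsto_nhds_unique h2 h1
    have := hrstar_min L ⟨hL_ge, hL_le.trans hrstar_mem.2⟩ hfixL
    rwa [le_antisymm hL_le this] at hconv
  -- key induction
  have key : ∀ n, ‖x n - x₀‖ ≤ t n ∧ ‖xbar - x n‖ ≤ rstar - t n := by
    intro n
    induction n with
    | zero =>
      have h0 : t 0 = 0 := rfl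
      rw [hx0, h0]
      exact ⟨by simp, by rw [sub_zero]; exact hbar_rstar⟩
    | succ n ih =>
      obtain ⟨ih1, ih2⟩ := ih
      have htn := ht_bounds n
      have htnR : t n ≤ R := htn.2.trans hrstar_mem.2
      have haplus_tn : aplus (t n) = a + F (t n) := hG _ ⟨htn.1, htnR⟩
      refine ⟨?_, ?_⟩
      · rw [hx_succ n]
        have hseg := seg (x n) x₀ 0 le_rfl (by simp) (by simpa using ih1.trans htnR)
        simp only [zero_add] at hseg
        rw [hF0] at hseg
        have h2 : ‖A (x n) - x₀‖ ≤ ‖A (x n) - A x₀‖ + a := by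
          have h3 : A (x n) - x₀ = (A (x n) - A x₀) + (A x₀ - x₀) := by abel
          calc ‖A (x n) - x₀‖ = ‖(A (x n) - A x₀) + (A x₀ - x₀)‖ := by rw [← h3]
            _ ≤ ‖A (x n) - A x₀‖ + ‖A x₀ - x₀‖ := norm_add_le _ _
            _ = ‖A (x n) - A x₀‖ + a := by rw [ha]
        have h4 := hFmono ih1
        rw [ht_succ n, haplus_tn]
        linarith
      · rw [hx_succ n, ← hbar_fix]
        have hsum : t n + ‖xbar - x n‖ ≤ rstar := by linarith
        have hseg := seg xbar (x n) (t n) htn.1 ih1 (hsum.trans hrstar_mem.2)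
        have h5 := hFmono hsum
        have h6 : aplus rstar = a + F rstar := hG _ hrstar_mem
        rw [ht_succ n, haplus_tn]
        have h7 : F rstar = rstar - a := by rw [h6] at hrstar_fix; linarith
        linarith
  -- conclude
  have hnorm0 : Filter.Tendsto (fun n => ‖xbar - x n‖) Filter.atTop (nhds 0) := by
    have h1 : Filter.Tendsto (fun n => rstar - t n) Filter.atTop (nhds 0) := by
      have h2 := hlim.const_sub rstar
      simpa using h2
    exact squeeze_zero (fun n => norm_nonneg _) (fun n => (key n).2) h1
  have hxb : Filter.Tendsto x Filter.atTop (nhds xbar) := by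
    rw [tendsto_iff_norm_sub_tendsto_zero]
    simpa [norm_sub_rev] using hnorm0
  exact tendsto_nhds_unique hxb hxstar_lim
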